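/- Let B : Ω → ℝ^{2×2} be a measurable symmetric-matrix-valued field on a domain Ω ⊆ ℝ² satisfying mα ≤ λ₁(B(x)) ≤ λ₂(B(x)) ≤ Mα for a.e. x, with 0 < m ≤ M, 0 < α < 1, α ≤ (m+M)/(2m), and set ν = (m+M)/2. Then for all v, w ∈ H¹₀(Ω) with |v|_{H¹} = |w|_{H¹} = 1, |∫_Ω Dv·Dw − (1/ν)(B Dv)·Dw dx| ≤ γ for some constant γ ∈ (0,1) independent of v, w. -/

import Mathlib

open Matrix MeasureTheory

lemma sym_bilin_bound (A : Matrix (Fin 2) (Fin 2) ℝ) (hA : A.IsSymm)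
    (a b ν c : ℝ) (hc : ∀ μ ∈ Set.Icc a b, |μ - ν| ≤ c)
    (heig : ∀ μ : ℝ, Module.End.HasEigenvalue (Matrix.toLin' A) μ → μ ∈ Set.Icc a b)
    (x y : EuclideanSpace ℝ (Fin 2)) :
    |(inner ℝ (Matrix.toEuclideanLin A x) y : ℝ) - ν * inner ℝ x y| ≤ c * (‖x‖ * ‖y‖) := by
  have hH : A.IsHermitian := by
    rw [Matrix.IsHermitian, Matrix.conjTranspose_eq_transpose_of_trivial]; exact hA
  set e := hH.eigenvectorBasis with he
  have hev : ∀ i, Matrix.toEuclideanLin A (e i) = hH.eigenvalues i • e i := by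
    intro i
    ext j
    have := congrFun (hH.mulVec_eigenvectorBasis i) j
    simpa [Matrix.toEuclideanLin_apply] using this
  have hsym : (Matrix.toEuclideanLin A).IsSymmetric := Matrix.isHermitian_iff_isSymmetric.1 hH
  have heigval : ∀ i, hH.eigenvalues i ∈ Set.Icc a b := by
    intro i
    apply heig
    apply Module.End.hasEigenvalue_of_hasEigenvector (x := (WithLp.equiv 2 _) (e i))
    constructor
    · rw [Module.End.mem_eigenspace_iff]
      exact congrArg (WithLp.equiv 2 _) (hev i)
    · simpa using e.toBasis.ne_zero i
  have hd : ∀ i, |hH.eigenvalues i - ν| ≤ c := fun i => hc _ (heigval i)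
  have hc0 : 0 ≤ c := le_trans (abs_nonneg _) (hd 0)
  have expand : ∀ z : EuclideanSpace ℝ (Fin 2),
      (inner ℝ (Matrix.toEuclideanLin A x) z : ℝ) = ∑ i, hH.eigenvalues i * ((inner ℝ x (e i) : ℝ) * inner ℝ (e i) z) := by
    intro z
    rw [← e.sum_inner_mul_inner (Matrix.toEuclideanLin A x) z]
    refine Finset.sum_congr rfl fun i _ => ?_
    rw [hsym x (e i), hev i, real_inner_smul_right]
    ring
  have hnx : ‖x‖ ^ 2 = ∑ i, (inner ℝ x (e i) : ℝ) ^ 2 := by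
    rw [← real_inner_self_eq_norm_sq, ← e.sum_inner_mul_inner x x]
    refine Finset.sum_congr rfl fun i _ => ?_
    rw [real_inner_comm (e i) x]; ring
  have hny : ‖y‖ ^ 2 = ∑ i, (inner ℝ (e i) y : ℝ) ^ 2 := by
    rw [← real_inner_self_eq_norm_sq, ← e.sum_inner_mul_inner y y]
    refine Finset.sum_congr rfl fun i _ => ?_
    rw [real_inner_comm (e i) y]; ring
  have hxy : (inner ℝ x y : ℝ) = ∑ i, (inner ℝ x (e i) : ℝ) * inner ℝ (e i) y :=
    (e.sum_inner_mul_inner x y).symm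
  rw [expand, hxy, Finset.mul_sum, ← Finset.sum_sub_distrib]
  have key : ∀ i, hH.eigenvalues i * ((inner ℝ x (e i) : ℝ) * inner ℝ (e i) y)
      - ν * ((inner ℝ x (e i) : ℝ) * inner ℝ (e i) y)
      = (hH.eigenvalues i - ν) * ((inner ℝ x (e i) : ℝ) * inner ℝ (e i) y) := fun i => by ring
  simp only [key]
  set p : Fin 2 → ℝ := fun i => inner ℝ x (e i) with hp
  set q : Fin 2 → ℝ := fun i => inner ℝ (e i) y with hq
  rw [Fin.sum_univ_two] at hnx hny ⊢
  have h0 := hd 0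
  have h1 := hd 1
  have habs : |(hH.eigenvalues 0 - ν) * (p 0 * q 0) + (hH.eigenvalues 1 - ν) * (p 1 * q 1)|
      ≤ c * (|p 0| * |q 0|) + c * (|p 1| * |q 1|) := by
    refine le_trans (abs_add_le _ _) (add_le_add ?_ ?_) <;>
      rw [abs_mul, abs_mul] <;>
      exact mul_le_mul_of_nonneg_right (by assumption)
        (mul_nonneg (abs_nonneg _) (abs_nonneg _))
  refine habs.trans ?_
  have hT : |p 0| * |q 0| + |p 1| * |q 1| ≤ ‖x‖ * ‖y‖ := by
    nlinarith [sq_nonneg (|p 0| * |q 1| - |p 1| * |q 0|), sq_abs (p 0), sq_abs (p 1),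
      sq_abs (q 0), sq_abs (q 1), abs_nonneg (p 0), abs_nonneg (p 1), abs_nonneg (q 0),
      abs_nonneg (q 1), norm_nonneg x, norm_nonneg y,
      mul_nonneg (norm_nonneg x) (norm_nonneg y),
      sq_nonneg (|p 0| * |q 0| + |p 1| * |q 1| - ‖x‖ * ‖y‖)]
  nlinarith [mul_nonneg (abs_nonneg (p 0)) (abs_nonneg (q 0)),
    mul_nonneg (abs_nonneg (p 1)) (abs_nonneg (q 1))]

/-- Discrete contraction estimate for the perturbed Laplacian bilinear form:
if the symmetric matrix field `B` has eigenvalues a.e. in `[mα, Mα]`, then with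
`ν = (m+M)/2` the form `(v,w) ↦ ∫ Dv·Dw - (1/ν)(B Dv)·Dw` is bounded by some
`γ ∈ (0,1)` on pairs with unit `H¹` seminorm. -/
theorem contraction_of_eigenvalue_bounds (Ω : Set (EuclideanSpace ℝ (Fin 2)))
    (hΩ : MeasurableSet Ω)
    (B : EuclideanSpace ℝ (Fin 2) → Matrix (Fin 2) (Fin 2) ℝ)
    (hBmeas : ∀ i j, Measurable fun x => B x i j)
    (m M α : ℝ) (hm : 0 < m) (hmM : m ≤ M) (hα0 : 0 < α) (hα1 : α < 1)
    (hα2 : α ≤ (m + M) / (2 * m))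
    (heig : ∀ᵐ x ∂(volume.restrict Ω), (B x).IsSymm ∧
      ∀ μ : ℝ, Module.End.HasEigenvalue (Matrix.toLin' (B x)) μ →
        μ ∈ Set.Icc (m * α) (M * α)) :
    ∃ γ : ℝ, 0 < γ ∧ γ < 1 ∧
      ∀ v w : EuclideanSpace ℝ (Fin 2) → ℝ,
        ContDiff ℝ 1 v → ContDiff ℝ 1 w →
        HasCompactSupport v → HasCompactSupport w →
        tsupport v ⊆ Ω → tsupport w ⊆ Ω →
        (∫ x in Ω, ‖gradient v x‖ ^ 2) = 1 → (∫ x in Ω, ‖gradient w x‖ ^ 2) = 1 →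
        |∫ x in Ω, ((inner ℝ (gradient v x) (gradient w x) : ℝ)
            - (1 / ((m + M) / 2)) *
              (inner ℝ (Matrix.toEuclideanLin (B x) (gradient v x)) (gradient w x) : ℝ))| ≤ γ := by
  have hM0 : 0 < M := lt_of_lt_of_le hm hmM
  set ν : ℝ := (m + M) / 2 with hνdef
  have hν0 : 0 < ν := by simp only [hνdef]; linarith
  set c : ℝ := max (ν - m * α) (M * α - ν) with hcdef
  have hc1 : ν - m * α ≤ c := le_max_left _ _
  have hc2 : M * α - ν ≤ c := le_max_right _ _
  have hmαν : m * α < ν := by have : m * α < m := by nlinarith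
                              simp only [hνdef]; nlinarith
  have hc0 : 0 < c := lt_of_lt_of_le (by linarith) hc1
  have hcν : c < ν := by
    apply max_lt
    · nlinarith
    · have : M * α < M := by nlinarith
      simp only [hνdef]; nlinarith
  refine ⟨c / ν, div_pos hc0 hν0, (div_lt_one hν0).2 hcν, ?_⟩
  intro v w hv hw hvc hwc hvs hws hv1 hw1
  have grad_cont : ∀ u : EuclideanSpace ℝ (Fin 2) → ℝ, ContDiff ℝ 1 u →
      Continuous (gradient u) := fun u hu =>
    (InnerProductSpace.toDual ℝ _).symm.continuous.comp (hu.continuous_fderiv one_ne_zero)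
  have grad_supp : ∀ u : EuclideanSpace ℝ (Fin 2) → ℝ, HasCompactSupport u →
      HasCompactSupport (gradient u) := fun u hu =>
    (hu.fderiv (𝕜 := ℝ)).comp_left (g := (InnerProductSpace.toDual ℝ _).symm) (map_zero _)
  have int_sq : ∀ u : EuclideanSpace ℝ (Fin 2) → ℝ, ContDiff ℝ 1 u → HasCompactSupport u →
      IntegrableOn (fun x => ‖gradient u x‖ ^ 2) Ω volume := by
    intro u hu huc
    have h1 : Continuous fun x => ‖gradient u x‖ ^ 2 := ((grad_cont u hu).norm).pow 2
    have h2 : HasCompactSupport fun x => ‖gradient u x‖ ^ 2 :=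
      (grad_supp u huc).comp_left (g := fun t => ‖t‖ ^ 2) (by simp)
    exact (h1.integrable_of_hasCompactSupport h2).integrableOn
  set f : EuclideanSpace ℝ (Fin 2) → ℝ := fun x =>
    (inner ℝ (gradient v x) (gradient w x) : ℝ) - (1 / ν) *
      (inner ℝ (Matrix.toEuclideanLin (B x) (gradient v x)) (gradient w x) : ℝ) with hfdef
  set g : EuclideanSpace ℝ (Fin 2) → ℝ := fun x =>
    c / (ν * 2) * (‖gradient v x‖ ^ 2 + ‖gradient w x‖ ^ 2) with hgdef
  have hgi : IntegrableOn g Ω volume :=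
    (((int_sq v hv hvc).add (int_sq w hw hwc)).const_mul _)
  have hae : ∀ᵐ x ∂(volume.restrict Ω), |f x| ≤ g x := by
    filter_upwards [heig] with x hx
    obtain ⟨hsymm, hev⟩ := hx
    have hb := sym_bilin_bound (B x) hsymm (m * α) (M * α) ν c
      (fun μ hμ => abs_le.2 ⟨by simp only [Set.mem_Icc] at hμ; linarith,
        by simp only [Set.mem_Icc] at hμ; linarith⟩) hev (gradient v x) (gradient w x)
    have hfe : f x = -(1 / ν) * ((inner ℝ (Matrix.toEuclideanLin (B x) (gradient v x))
        (gradient w x) : ℝ) - ν * inner ℝ (gradient v x) (gradient w x)) := by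
      simp only [hfdef]; field_simp; ring
    rw [hfe, abs_mul, abs_neg, abs_of_pos (by positivity : (0:ℝ) < 1 / ν)]
    have hnn := mul_nonneg (norm_nonneg (gradient v x)) (norm_nonneg (gradient w x))
    have hsq := sq_nonneg (‖gradient v x‖ - ‖gradient w x‖)
    simp only [hgdef]
    refine le_trans (mul_le_mul_of_nonneg_left hb (by positivity)) ?_
    rw [one_div_mul_eq_div, div_mul_eq_mul_div, div_le_div_iff₀ hν0 (by positivity)]
    nlinarith [mul_nonneg (mul_nonneg hc0.le hν0.le) hsq]
  calc |∫ x in Ω, f x| ≤ ∫ x in Ω, |f x| := by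
        simpa [Real.norm_eq_abs] using
          norm_integral_le_integral_norm (μ := volume.restrict Ω) f
    _ ≤ ∫ x in Ω, g x :=
        integral_mono_of_nonneg (Filter.Eventually.of_forall fun x => abs_nonneg _) hgi hae
    _ = c / ν := by
        simp only [hgdef]
        rw [integral_const_mul, integral_add (int_sq v hv hvc) (int_sq w hw hwc), hv1, hw1]
        field_simp
        ring
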